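/- Fix an integer N ≥ 3, set θ_i = 2πi/N for i = 0, …, N−1, and suppose δ > 0 satisfies δ · ∑_{i=1}^{N−1} sin²θ_i < 1. Let V₀ > 0 and V_i = 0 for i ≠ 0, and let r : [0, ∞) → ℝ^N be a differentiable solution of the N-dimensional ring system. Then for every j ∈ {1, …, N−1}, the difference r_j(t) − r_{N−j}(t) converges to 0 as t → ∞; that is, the solution becomes asymptotically symmetric about the stimulated direction θ₀ = 0. -/

import Mathlib

open Filter Real

set_option maxHeartbeats 1000000 in
/-- Under the same assumptions as for the decay of `m_y`, every solution
of the `N`-dimensional ring system becomes asymptotically symmetric about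
the stimulated direction `θ₀ = 0`: for each `j ∈ {1,…,N-1}`,
`r_j(t) - r_{N-j}(t) → 0` as `t → ∞`. -/
theorem stmt12 (N : ℕ) (hN : 3 ≤ N) (δ V₀ : ℝ) (hδ0 : 0 < δ) (hV₀ : 0 < V₀)
    (θ : Fin N → ℝ) (hθ : ∀ i : Fin N, θ i = 2 * π * i / N)
    (hδ : δ * ∑ i ∈ Finset.univ.erase (⟨0, by omega⟩ : Fin N),
      Real.sin (θ i) ^ 2 < 1)
    (V : Fin N → ℝ) (hV0 : V ⟨0, by omega⟩ = V₀)
    (hVi : ∀ i : Fin N, i ≠ ⟨0, by omega⟩ → V i = 0)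
    (r : Fin N → ℝ → ℝ)
    (hr : ∀ i : Fin N, ∀ t ≥ (0 : ℝ), HasDerivAt (r i)
      (-r i t + max (δ * ∑ j, Real.cos (θ i - θ j) * r j t + V i) 0) t) :
    ∀ j k : Fin N, j ≠ ⟨0, by omega⟩ → (k : ℕ) = N - (j : ℕ) →
      Tendsto (fun t => r j t - r k t) atTop (nhds 0) := by
  intro j k hj hk
  have hNR : (0:ℝ) < N := by exact_mod_cast (by omega : 0 < N)
  set i0 : Fin N := ⟨0, by omega⟩ with hi0
  -- the reflection σ i = N - i (mod N)
  set σ : Fin N → Fin N := fun i => ⟨(N - i.val) % N, Nat.mod_lt _ (by omega)⟩ with hσdef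
  have hσ0 : σ i0 = i0 := by
    apply Fin.ext
    show (N - 0) % N = 0
    simp
  have hσval : ∀ i : Fin N, i ≠ i0 → (σ i).val = N - i.val := by
    intro i hi
    have hv : i.val ≠ 0 := by
      intro h; exact hi (Fin.ext h)
    have := i.isLt
    show (N - i.val) % N = N - i.val
    exact Nat.mod_eq_of_lt (by omega)
  have hinv : ∀ i : Fin N, σ (σ i) = i := by
    intro i
    by_cases hi : i = i0
    · rw [hi, hσ0, hσ0]
    · apply Fin.ext
      have h1 := hσval i hi
      have hv : i.val ≠ 0 := by intro h; exact hi (Fin.ext h)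
      have h2 := i.isLt
      have hσne : σ i ≠ i0 := by
        intro h
        have : (σ i).val = 0 := by rw [h]
        omega
      rw [hσval (σ i) hσne, h1]
      omega
  have hbij : Function.Bijective σ := Function.Involutive.bijective hinv
  -- trigonometric symmetry
  have hθ0 : θ i0 = 0 := by rw [hθ]; simp [hi0]
  have hθσ : ∀ i : Fin N, i ≠ i0 → θ (σ i) = 2 * π - θ i := by
    intro i hi
    rw [hθ, hθ]
    have h1 : ((σ i : Fin N) : ℕ) = N - i.val := hσval i hi
    rw [h1]
    have h2 : ((N - i.val : ℕ) : ℝ) = (N : ℝ) - (i.val : ℝ) := by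
      have := i.isLt.le
      push_cast [Nat.cast_sub this]
      ring
    rw [h2]
    field_simp
  have hsinσ : ∀ i : Fin N, Real.sin (θ (σ i)) = -Real.sin (θ i) := by
    intro i
    by_cases hi : i = i0
    · rw [hi, hσ0, hθ0]; simp
    · rw [hθσ i hi, Real.sin_two_pi_sub]
  have hcosσ : ∀ i : Fin N, Real.cos (θ (σ i)) = Real.cos (θ i) := by
    intro i
    by_cases hi : i = i0
    · rw [hi, hσ0]
    · rw [hθσ i hi, Real.cos_two_pi_sub]
  -- abbreviations
  set m : ℝ → ℝ := fun t => ∑ l, Real.sin (θ l) * r l t with hm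
  set A : Fin N → ℝ → ℝ := fun i t => δ * ∑ l, Real.cos (θ i - θ l) * r l t + V i with hA
  set G : ℝ → ℝ := fun t => ∑ i, Real.sin (θ i) * max (A i t) 0 with hGdef
  -- key identity
  have hVσ : ∀ i : Fin N, V (σ i) = V i := by
    intro i
    by_cases hi : i = i0
    · rw [hi, hσ0]
    · have hσne : σ i ≠ i0 := by
        intro h
        have h1 := hσval i hi
        have hv : i.val ≠ 0 := by intro h'; exact hi (Fin.ext h')
        have h2 := i.isLt
        have : (σ i).val = 0 := by rw [h]
        omega
      rw [hVi _ hσne, hVi _ hi]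
  have hkey : ∀ (i : Fin N) (t : ℝ), A i t - A (σ i) t = 2 * δ * Real.sin (θ i) * m t := by
    intro i t
    have hsum : (∑ l, Real.cos (θ i - θ l) * r l t) - (∑ l, Real.cos (θ (σ i) - θ l) * r l t)
        = 2 * Real.sin (θ i) * m t := by
      rw [← Finset.sum_sub_distrib]
      rw [hm]
      rw [Finset.mul_sum]
      apply Finset.sum_congr rfl
      intro l _
      rw [Real.cos_sub, Real.cos_sub, hsinσ i, hcosσ i]
      ring
    simp only [hA]
    rw [hVσ i]
    linear_combination δ * hsum
  -- sum of squares
  set S : ℝ := ∑ i, Real.sin (θ i) ^ 2 with hS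
  have hS_erase : δ * S < 1 := by
    have : S = (∑ i ∈ Finset.univ.erase i0, Real.sin (θ i) ^ 2) + Real.sin (θ i0) ^ 2 := by
      rw [hS, Finset.sum_erase_add _ _ (Finset.mem_univ i0)]
    rw [this, hθ0]
    simpa using hδ
  have hS_nonneg : 0 ≤ S := Finset.sum_nonneg fun i _ => sq_nonneg _
  set K : ℝ := max (δ * S) (1/2) with hK
  have hK0 : (0:ℝ) < K := lt_of_lt_of_le one_half_pos (le_max_right _ _)
  have hK1 : K < 1 := max_lt hS_erase (by norm_num)
  have hδS_le_K : δ * S ≤ K := le_max_left _ _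
  -- derivative of m
  have hmderiv : ∀ t ≥ (0:ℝ), HasDerivAt m (-m t + G t) t := by
    intro t ht
    have h1 : HasDerivAt (fun u => ∑ l, Real.sin (θ l) * r l u)
        (∑ l, Real.sin (θ l) * (-r l t + max (A l t) 0)) t := by
      apply HasDerivAt.fun_sum
      intro l _
      exact (hr l t ht).const_mul _
    have h2 : (∑ l, Real.sin (θ l) * (-r l t + max (A l t) 0)) = -m t + G t := by
      rw [hm, hGdef]
      rw [← Finset.sum_neg_distrib, ← Finset.sum_add_distrib]
      apply Finset.sum_congr rfl
      intro l _
      ring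
    rw [← h2]
    exact h1
  -- bound on G
  have hGbound : ∀ t : ℝ, |G t| ≤ K * |m t| := by
    intro t
    have hreidx : G t = ∑ i, Real.sin (θ (σ i)) * max (A (σ i) t) 0 :=
      (Fintype.sum_bijective σ hbij (fun i => Real.sin (θ (σ i)) * max (A (σ i) t) 0)
        (fun i => Real.sin (θ i) * max (A i t) 0) (fun _ => rfl)).symm
    have h2G : 2 * G t = ∑ i, Real.sin (θ i) * (max (A i t) 0 - max (A (σ i) t) 0) := by
      have hGG : G t + G t
          = ∑ i, (Real.sin (θ i) * max (A i t) 0 + Real.sin (θ (σ i)) * max (A (σ i) t) 0) := by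
        rw [Finset.sum_add_distrib, ← hreidx]
      rw [two_mul, hGG]
      apply Finset.sum_congr rfl
      intro i _
      rw [hsinσ i]
      ring
    have habs : |2 * G t| ≤ ∑ i, 2 * δ * Real.sin (θ i) ^ 2 * |m t| := by
      rw [h2G]
      refine (Finset.abs_sum_le_sum_abs _ _).trans (Finset.sum_le_sum ?_)
      intro i _
      have h1 : |max (A i t) 0 - max (A (σ i) t) 0| ≤ 2 * δ * |Real.sin (θ i)| * |m t| := by
        refine (abs_max_sub_max_le_abs _ _ _).trans_eq ?_
        rw [hkey i t]
        rw [abs_mul, abs_mul, abs_mul, abs_of_pos hδ0, abs_of_pos (by norm_num : (0:ℝ) < 2)]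
      calc |Real.sin (θ i) * (max (A i t) 0 - max (A (σ i) t) 0)|
          = |Real.sin (θ i)| * |max (A i t) 0 - max (A (σ i) t) 0| := abs_mul _ _
        _ ≤ |Real.sin (θ i)| * (2 * δ * |Real.sin (θ i)| * |m t|) :=
            mul_le_mul_of_nonneg_left h1 (abs_nonneg _)
        _ = 2 * δ * Real.sin (θ i) ^ 2 * |m t| := by rw [← sq_abs]; ring
    have hsum : (∑ i, 2 * δ * Real.sin (θ i) ^ 2 * |m t|) = 2 * (δ * S) * |m t| := by
      simp only [hS, Finset.mul_sum, Finset.sum_mul]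
      exact Finset.sum_congr rfl fun i _ => by ring
    rw [hsum] at habs
    rw [abs_mul, abs_of_pos (by norm_num : (0:ℝ) < 2)] at habs
    nlinarith [abs_nonneg (m t), abs_nonneg (G t)]
  -- decay of m via Grönwall
  have hhderiv : ∀ u ≥ (0:ℝ), HasDerivAt (fun u => Real.exp u * m u) (Real.exp u * G u) u := by
    intro u hu
    have h1 := (Real.hasDerivAt_exp u).fun_mul (hmderiv u hu)
    convert! h1 using 1
    ring
  have hmdecay : ∀ t ≥ (0:ℝ), |m t| ≤ |m 0| * Real.exp ((K - 1) * t) := by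
    intro t ht
    have hcont : ContinuousOn (fun u => Real.exp u * m u) (Set.Icc 0 t) := by
      intro u hu
      exact (hhderiv u hu.1).continuousAt.continuousWithinAt
    have hb := norm_le_gronwallBound_of_norm_deriv_right_le (f' := fun u => Real.exp u * G u)
      (δ := |m 0|) (K := K) (ε := 0) hcont
      (fun u hu => (hhderiv u hu.1).hasDerivWithinAt)
      (by simp [Real.norm_eq_abs, Real.exp_zero])
      (fun u hu => by
        rw [Real.norm_eq_abs, Real.norm_eq_abs, abs_mul, abs_mul,
          abs_of_pos (Real.exp_pos u), add_zero]
        calc Real.exp u * |G u| ≤ Real.exp u * (K * |m u|) :=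
              mul_le_mul_of_nonneg_left (hGbound u) (Real.exp_pos u).le
          _ = K * (Real.exp u * |m u|) := by ring)
      t (Set.right_mem_Icc.2 ht)
    rw [gronwallBound_ε0, Real.norm_eq_abs, abs_mul, abs_of_pos (Real.exp_pos t), sub_zero] at hb
    have hexp : Real.exp ((K - 1) * t) * Real.exp t = Real.exp (K * t) := by
      rw [← Real.exp_add]; ring_nf
    nlinarith [Real.exp_pos t, abs_nonneg (m 0), abs_nonneg (m t)]
  -- k = σ j
  have hkj : k = σ j := by
    apply Fin.ext
    rw [hσval j hj]
    exact hk
  -- the difference and its decay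
  set C : ℝ := 2 * δ * |Real.sin (θ j)| * |m 0| with hC
  have hC0 : 0 ≤ C := by positivity
  have hgb : ∀ u ≥ (0:ℝ), |max (A j u) 0 - max (A k u) 0| ≤ C * Real.exp ((K - 1) * u) := by
    intro u hu
    rw [hkj]
    refine (abs_max_sub_max_le_abs _ _ _).trans ?_
    rw [hkey j u, abs_mul, abs_mul, abs_mul, abs_of_pos hδ0,
      abs_of_pos (by norm_num : (0:ℝ) < 2)]
    rw [hC]
    have h2 := mul_le_mul_of_nonneg_left (hmdecay u hu)
      (by positivity : (0:ℝ) ≤ 2 * δ * |Real.sin (θ j)|)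
    linarith
  have hwderiv : ∀ u ≥ (0:ℝ), HasDerivAt (fun u => Real.exp u * (r j u - r k u))
      (Real.exp u * (max (A j u) 0 - max (A k u) 0)) u := by
    intro u hu
    have h1 := (Real.hasDerivAt_exp u).fun_mul ((hr j u hu).fun_sub (hr k u hu))
    convert! h1 using 1
    simp only [hA]
    ring
  set s0 : ℝ := |r j 0 - r k 0| with hs0
  have hBderiv : ∀ u : ℝ, HasDerivAt (fun u => s0 + C / K * (Real.exp (K * u) - 1))
      (C * Real.exp (K * u)) u := by
    intro u
    have h1 : HasDerivAt (fun u : ℝ => K * u) K u := by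
      simpa using (hasDerivAt_id u).const_mul K
    have h2 := (Real.hasDerivAt_exp (K * u)).comp u h1
    have h3 := ((h2.sub_const 1).const_mul (C / K)).const_add s0
    convert! h3 using 1
    field_simp
  have hsbound : ∀ t ≥ (0:ℝ),
      |r j t - r k t| ≤ s0 * Real.exp (-t) + C / K * Real.exp ((K - 1) * t) := by
    intro t ht
    have hcont : ContinuousOn (fun u => Real.exp u * (r j u - r k u)) (Set.Icc 0 t) := by
      intro u hu
      exact (hwderiv u hu.1).continuousAt.continuousWithinAt
    have hb := image_norm_le_of_norm_deriv_right_le_deriv_boundary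
      (f' := fun u => Real.exp u * (max (A j u) 0 - max (A k u) 0))
      hcont (fun u hu => (hwderiv u hu.1).hasDerivWithinAt)
      (B := fun u => s0 + C / K * (Real.exp (K * u) - 1))
      (B' := fun u => C * Real.exp (K * u))
      (by simp [Real.norm_eq_abs, Real.exp_zero, hs0])
      hBderiv
      (fun u hu => by
        show ‖Real.exp u * (max (A j u) 0 - max (A k u) 0)‖ ≤ C * Real.exp (K * u)
        rw [Real.norm_eq_abs, abs_mul, abs_of_pos (Real.exp_pos u)]
        have h1 := hgb u hu.1
        have hexp : Real.exp u * Real.exp ((K - 1) * u) = Real.exp (K * u) := by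
          rw [← Real.exp_add]; ring_nf
        calc Real.exp u * |max (A j u) 0 - max (A k u) 0|
            ≤ Real.exp u * (C * Real.exp ((K - 1) * u)) :=
              mul_le_mul_of_nonneg_left h1 (Real.exp_pos u).le
          _ = C * (Real.exp u * Real.exp ((K - 1) * u)) := by ring
          _ = C * Real.exp (K * u) := by rw [hexp])
      (Set.right_mem_Icc.2 ht)
    rw [Real.norm_eq_abs, abs_mul, abs_of_pos (Real.exp_pos t)] at hb
    have hexp1 : Real.exp (-t) * Real.exp t = 1 := by
      rw [← Real.exp_add]; simp
    have hexp2 : Real.exp ((K - 1) * t) * Real.exp t = Real.exp (K * t) := by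
      rw [← Real.exp_add]; ring_nf
    have hCK : 0 ≤ C / K := div_nonneg hC0 hK0.le
    rw [← mul_le_mul_iff_of_pos_right (Real.exp_pos t)]
    calc |r j t - r k t| * Real.exp t = Real.exp t * |r j t - r k t| := mul_comm _ _
      _ ≤ s0 + C / K * (Real.exp (K * t) - 1) := hb
      _ ≤ s0 + C / K * Real.exp (K * t) := by linarith
      _ = (s0 * Real.exp (-t) + C / K * Real.exp ((K - 1) * t)) * Real.exp t := by
          rw [add_mul, mul_assoc, mul_assoc, hexp1, hexp2, mul_one]
  -- conclude by squeezing
  have t1 : Tendsto (fun t : ℝ => s0 * Real.exp (-t)) atTop (nhds 0) := by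
    simpa using Real.tendsto_exp_neg_atTop_nhds_zero.const_mul s0
  have t2 : Tendsto (fun t : ℝ => C / K * Real.exp ((K - 1) * t)) atTop (nhds 0) := by
    have hlin : Tendsto (fun t : ℝ => (K - 1) * t) atTop atBot :=
      (tendsto_const_mul_atBot_of_neg (by linarith)).2 tendsto_id
    have := Real.tendsto_exp_atBot.comp hlin
    simpa using this.const_mul (C / K)
  have tg : Tendsto (fun t : ℝ => s0 * Real.exp (-t) + C / K * Real.exp ((K - 1) * t))
      atTop (nhds 0) := by
    simpa using t1.add t2
  refine squeeze_zero_norm' ?_ tg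
  filter_upwards [eventually_ge_atTop (0:ℝ)] with t ht
  simpa [Real.norm_eq_abs] using hsbound t ht
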